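/- Let {b_n} be a sequence of positive reals such that ∑ b_n^{-p-1} converges absolutely for some positive integer p, and let a > 0. Then ∑_{n=1}^∞ ∑_{j=1}^{p} ((-1)^j/j) a^j ( z^j/(a+b_n)^j − (1+z)^j/b_n^j + 1/b_n^j ) = ∑_{k=1}^{p} E^p_k(a) z^k, where E^p_k(a) = ∑_{n=1}^∞ ( ((-1)^k/k) a^k/(a+b_n)^k − ∑_{j=k}^{p} ((-1)^j/j) C(j,k) a^j/b_n^j ). -/

import Mathlib

open Finset

lemma key_id (k M : ℕ) (x : ℝ) :
    ∑ m ∈ range (M+1), ((m+k).choose k : ℝ) * (-x)^m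
      = (1+x) * ∑ m ∈ range (M+1), ((m+(k+1)).choose (k+1) : ℝ) * (-x)^m
        + ((M+1+k).choose (k+1) : ℝ) * (-x)^(M+1) := by
  induction M with
  | zero =>
    rw [show (0:ℕ)+1+k = k+1 by omega, Nat.choose_self]
    simp
  | succ M ih =>
    conv_lhs => rw [sum_range_succ]
    conv_rhs => rw [sum_range_succ]
    rw [ih]
    have pascal : ((M+1+1+k).choose (k+1) : ℝ)
        = ((M+1+k).choose (k+1) : ℝ) + ((M+1+k).choose k : ℝ) := by
      have h : M+1+1+k = (M+1+k)+1 := by omega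
      rw [h, Nat.choose_succ_succ']
      push_cast; ring
    rw [show M+1+(k+1) = M+1+1+k from by omega, pascal]
    ring

lemma R_bound (k M : ℕ) : ∃ D : ℝ, 0 ≤ D ∧ ∀ x : ℝ, 0 ≤ x →
    |1/(1+x)^(k+1) - ∑ m ∈ range (M+1), ((m+k).choose k : ℝ) * (-x)^m| ≤ D * x^(M+1) := by
  induction k with
  | zero =>
    refine ⟨1, zero_le_one, fun x hx => ?_⟩
    have h1 : (0:ℝ) < 1 + x := by linarith
    have hgeom : ∑ m ∈ range (M+1), ((m+0).choose 0 : ℝ) * (-x)^m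
        = ((-x)^(M+1) - 1)/((-x) - 1) := by
      simp only [Nat.choose_zero_right, Nat.cast_one, one_mul]
      exact geom_sum_eq (by nlinarith : (-x : ℝ) ≠ 1) (M+1)
    rw [hgeom]
    have hne : (1:ℝ) + x ≠ 0 := ne_of_gt h1
    have hne' : (-x : ℝ) - 1 ≠ 0 := by intro h; apply hne; linarith
    have : 1/(1+x)^(0+1) - ((-x)^(M+1) - 1)/((-x) - 1) = (-x)^(M+1)/(1+x) := by
      field_simp
      ring
    rw [this, abs_div, abs_pow, abs_neg, abs_of_nonneg hx, abs_of_pos h1]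
    rw [div_le_iff₀ h1]
    nlinarith [pow_nonneg hx (M+1)]
  | succ k ih =>
    obtain ⟨D, hD, hb⟩ := ih
    refine ⟨D + ((M+1+k).choose (k+1) : ℝ), by positivity, fun x hx => ?_⟩
    have h1 : (0:ℝ) < 1 + x := by linarith
    have hne : (1:ℝ) + x ≠ 0 := ne_of_gt h1
    have key := key_id k M x
    have heq : 1/(1+x)^(k+1+1) - ∑ m ∈ range (M+1), ((m+(k+1)).choose (k+1) : ℝ) * (-x)^m
        = ((1/(1+x)^(k+1) - ∑ m ∈ range (M+1), ((m+k).choose k : ℝ) * (-x)^m)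
          + ((M+1+k).choose (k+1) : ℝ) * (-x)^(M+1)) / (1+x) := by
      rw [key]
      have hstep : (1/(1+x)^(k+1)
            - ((1+x) * ∑ m ∈ range (M+1), ((m+(k+1)).choose (k+1) : ℝ) * (-x)^m
               + ((M+1+k).choose (k+1) : ℝ) * (-x)^(M+1))
            + ((M+1+k).choose (k+1) : ℝ) * (-x)^(M+1))
          = 1/(1+x)^(k+1) - (1+x) * ∑ m ∈ range (M+1), ((m+(k+1)).choose (k+1) : ℝ) * (-x)^m := by
        ring
      rw [hstep, sub_div, div_div, ← pow_succ, mul_div_cancel_left₀ _ hne]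
    rw [heq, abs_div, abs_of_pos h1]
    have habs : |(1/(1+x)^(k+1) - ∑ m ∈ range (M+1), ((m+k).choose k : ℝ) * (-x)^m)
          + ((M+1+k).choose (k+1) : ℝ) * (-x)^(M+1)|
        ≤ D * x^(M+1) + ((M+1+k).choose (k+1) : ℝ) * x^(M+1) := by
      refine (abs_add_le _ _).trans (add_le_add (hb x hx) ?_)
      rw [abs_mul, abs_pow, abs_neg, abs_of_nonneg hx, Nat.abs_cast]
    calc _ ≤ |(1/(1+x)^(k+1) - ∑ m ∈ range (M+1), ((m+k).choose k : ℝ) * (-x)^m)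
          + ((M+1+k).choose (k+1) : ℝ) * (-x)^(M+1)| :=
        div_le_self (abs_nonneg _) (by linarith)
      _ ≤ D * x^(M+1) + ((M+1+k).choose (k+1) : ℝ) * x^(M+1) := habs
      _ = (D + ((M+1+k).choose (k+1) : ℝ)) * x^(M+1) := by ring

noncomputable def cfun (p k : ℕ) (x : ℝ) : ℝ :=
  (-1)^k / k * (x/(1+x))^k - ∑ j ∈ Icc k p, (-1)^j / j * (j.choose k) * x^j

lemma cfun_zero (p k : ℕ) (hk : 0 < k) : cfun p k 0 = 0 := by
  unfold cfun
  rw [Finset.sum_eq_zero]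
  · simp [zero_pow (by omega : k ≠ 0)]
  · intro j hj
    have hj1 : 1 ≤ j := le_trans hk (mem_Icc.mp hj).1
    simp [zero_pow (by omega : j ≠ 0)]

lemma cfun_hasDeriv (p k : ℕ) (hk : 1 ≤ k) (hkp : k ≤ p) (x : ℝ) (hx : 0 ≤ x) :
    HasDerivAt (cfun p k)
      ((-1)^k * x^(k-1) * (1/(1+x)^(k+1) - ∑ m ∈ range (p-k+1), ((m+k).choose k : ℝ) * (-x)^m))
      x := by
  have h1 : (0:ℝ) < 1 + x := by linarith
  have hne : (1:ℝ) + x ≠ 0 := ne_of_gt h1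
  have hkne : (k:ℝ) ≠ 0 := Nat.cast_ne_zero.mpr (by omega)
  have hu : HasDerivAt (fun y : ℝ => y/(1+y)) ((1*(1+x) - x*1)/(1+x)^2) x :=
    (hasDerivAt_id x).div ((hasDerivAt_id x).const_add 1) hne
  have hu' : HasDerivAt (fun y : ℝ => y/(1+y)) (1/(1+x)^2) x := by
    convert hu using 1; ring
  have hA : HasDerivAt (fun y : ℝ => (-1)^k / k * (y/(1+y))^k)
      ((-1)^k / k * ((k:ℝ) * (x/(1+x))^(k-1) * (1/(1+x)^2))) x :=
    ((hu'.pow k).const_mul _)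
  have hB : HasDerivAt (fun y : ℝ => ∑ j ∈ Icc k p, (-1)^j / j * (j.choose k) * y^j)
      (∑ j ∈ Icc k p, (-1)^j / j * (j.choose k) * ((j:ℝ) * x^(j-1))) x := by
    refine HasDerivAt.fun_sum fun j hj => ?_
    exact (hasDerivAt_pow j x).const_mul _
  have hd := hA.sub hB
  have e1 : (-1:ℝ)^k/k * ((k:ℝ) * (x/(1+x))^(k-1) * (1/(1+x)^2))
      = (-1)^k * x^(k-1) * (1/(1+x)^(k+1)) := by
    have hpow : (1+x)^(k-1) * (1+x)^2 = (1+x)^(k+1) := by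
      rw [← pow_add]; congr 1; omega
    calc (-1:ℝ)^k/k * ((k:ℝ) * (x/(1+x))^(k-1) * (1/(1+x)^2))
        = (-1)^k * ((x/(1+x))^(k-1) * (1/(1+x)^2)) := by field_simp
      _ = (-1)^k * (x^(k-1) * 1/((1+x)^(k-1) * (1+x)^2)) := by
          rw [div_pow, div_mul_div_comm]
      _ = (-1)^k * x^(k-1) * (1/(1+x)^(k+1)) := by rw [hpow]; ring
  have e2 : ∑ j ∈ Icc k p, (-1:ℝ)^j / j * (j.choose k) * ((j:ℝ) * x^(j-1))
      = (-1)^k * x^(k-1) * ∑ m ∈ range (p-k+1), ((m+k).choose k : ℝ) * (-x)^m := by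
    rw [← Finset.Ico_add_one_right_eq_Icc, Finset.sum_Ico_eq_sum_range]
    rw [Finset.mul_sum]
    have hcard : p + 1 - k = p - k + 1 := by omega
    rw [hcard]
    refine Finset.sum_congr rfl fun m hm => ?_
    have hjne : ((k+m : ℕ) : ℝ) ≠ 0 := Nat.cast_ne_zero.mpr (by omega)
    have hxp : x^(k+m-1) = x^(k-1) * x^m := by
      rw [← pow_add]; congr 1; omega
    have hneg : ((-1:ℝ))^(k+m) = (-1)^k * (-1)^m := pow_add _ _ _
    have hch : ((k+m).choose k : ℝ) = ((m+k).choose k : ℝ) := by rw [Nat.add_comm]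
    rw [hneg, hxp, hch, neg_pow x m]
    field_simp
  rw [e1, e2, ← mul_sub] at hd
  exact hd

lemma cfun_bound (p k : ℕ) (hk : 1 ≤ k) (hkp : k ≤ p) :
    ∃ D : ℝ, 0 ≤ D ∧ ∀ x : ℝ, 0 ≤ x → |cfun p k x| ≤ D * x^(p+1) := by
  obtain ⟨D, hD, hR⟩ := R_bound k (p - k)
  refine ⟨D, hD, fun X hX => ?_⟩
  set f' : ℝ → ℝ := fun t =>
    (-1)^k * t^(k-1) * (1/(1+t)^(k+1) - ∑ m ∈ range (p-k+1), ((m+k).choose k : ℝ) * (-t)^m)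
  have hbound : ∀ t ∈ Set.Icc (0:ℝ) X, ‖f' t‖ ≤ D * X^p := by
    intro t ht
    obtain ⟨ht0, htX⟩ := ht
    have h1 : ‖f' t‖ = t^(k-1) * |1/(1+t)^(k+1) - ∑ m ∈ range (p-k+1), ((m+k).choose k : ℝ) * (-t)^m| := by
      simp only [f', Real.norm_eq_abs, abs_mul, abs_pow, abs_neg, abs_one, one_pow, one_mul,
        abs_of_nonneg ht0]
    rw [h1]
    have h2 : t^(k-1) * |1/(1+t)^(k+1) - ∑ m ∈ range (p-k+1), ((m+k).choose k : ℝ) * (-t)^m|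
        ≤ t^(k-1) * (D * t^(p-k+1)) :=
      mul_le_mul_of_nonneg_left (hR t ht0) (pow_nonneg ht0 _)
    refine h2.trans ?_
    have h3 : t^(k-1) * (D * t^(p-k+1)) = D * t^p := by
      rw [show t^(k-1) * (D * t^(p-k+1)) = D * (t^(k-1) * t^(p-k+1)) from by ring, ← pow_add]
      congr 2
      omega
    rw [h3]
    exact mul_le_mul_of_nonneg_left (pow_le_pow_left₀ ht0 htX p) hD
  have hmv := (convex_Icc (0:ℝ) X).norm_image_sub_le_of_norm_hasDerivWithin_le
    (fun t ht => (cfun_hasDeriv p k hk hkp t ht.1).hasDerivWithinAt) hbound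
    (Set.left_mem_Icc.mpr hX) (Set.right_mem_Icc.mpr hX)
  rw [cfun_zero p k (by omega), sub_zero, Real.norm_eq_abs, sub_zero, Real.norm_eq_abs,
    abs_of_nonneg hX] at hmv
  calc |cfun p k X| ≤ D * X^p * X := hmv
    _ = D * X^(p+1) := by rw [pow_succ]; ring

lemma binom_expand (z : ℝ) (j : ℕ) :
    (1+z)^j = 1 + ∑ k ∈ Icc 1 j, (j.choose k : ℝ) * z^k := by
  rw [add_comm (1:ℝ) z, add_pow, Finset.sum_range_succ']
  simp only [one_pow, pow_zero, one_mul, Nat.choose_zero_right, Nat.cast_one, mul_one]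
  rw [add_comm]
  congr 1
  rw [← Finset.Ico_add_one_right_eq_Icc, Finset.sum_Ico_eq_sum_range]
  refine Finset.sum_congr (by norm_num) fun i _ => by rw [Nat.add_comm 1 i, mul_comm]

lemma pointwise (p : ℕ) (a bn z : ℝ) :
    ∑ j ∈ Icc 1 p, (-1)^j / (j:ℝ) * a^j * (z^j/(a+bn)^j - (1+z)^j/bn^j + 1/bn^j)
      = ∑ k ∈ Icc 1 p, ((-1)^k / (k:ℝ) * a^k / (a+bn)^k
          - ∑ j ∈ Icc k p, (-1)^j / (j:ℝ) * (j.choose k) * a^j / bn^j) * z^k := by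
  have hterm : ∀ j ∈ Icc 1 p,
      (-1)^j / (j:ℝ) * a^j * (z^j/(a+bn)^j - (1+z)^j/bn^j + 1/bn^j)
        = ((-1)^j / (j:ℝ) * a^j / (a+bn)^j) * z^j
          - ∑ k ∈ Icc 1 j, ((-1)^j / (j:ℝ) * (j.choose k) * a^j / bn^j) * z^k := by
    intro j hj
    rw [binom_expand]
    have : (-1:ℝ)^j / (j:ℝ) * a^j *
        (z^j/(a+bn)^j - (1 + ∑ k ∈ Icc 1 j, (j.choose k : ℝ) * z^k)/bn^j + 1/bn^j)
      = ((-1)^j / (j:ℝ) * a^j / (a+bn)^j) * z^j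
        - ((-1)^j / (j:ℝ) * a^j / bn^j) * ∑ k ∈ Icc 1 j, (j.choose k : ℝ) * z^k := by
      ring
    rw [this, Finset.mul_sum]
    congr 1
    exact Finset.sum_congr rfl fun k _ => by ring
  rw [Finset.sum_congr rfl hterm, Finset.sum_sub_distrib]
  have hswap : ∑ j ∈ Icc 1 p, ∑ k ∈ Icc 1 j, ((-1:ℝ)^j / (j:ℝ) * (j.choose k) * a^j / bn^j) * z^k
      = ∑ k ∈ Icc 1 p, ∑ j ∈ Icc k p, ((-1:ℝ)^j / (j:ℝ) * (j.choose k) * a^j / bn^j) * z^k := by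
    have := Finset.sum_Ico_Ico_comm 1 (p+1)
      (fun k j => ((-1:ℝ)^j / (j:ℝ) * (j.choose k) * a^j / bn^j) * z^k)
    simp only [Finset.Ico_add_one_right_eq_Icc] at this
    rw [← this]
  rw [hswap, ← Finset.sum_sub_distrib]
  refine Finset.sum_congr rfl fun k hk => ?_
  rw [sub_mul, Finset.sum_mul]

/-- Polynomial rearrangement lemma for the coefficients `E^p_k(a)`. -/
theorem spectral_rearrangement (b : ℕ → ℝ) (hb : ∀ n, 0 < b n) (p : ℕ) (hp : 0 < p)
    (hsum : Summable fun n => 1 / (b n) ^ (p + 1)) (a : ℝ) (ha : 0 < a) (z : ℝ) :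
    ∑' n, ∑ j ∈ Finset.Icc 1 p, (-1) ^ j / (j : ℝ) * a ^ j *
        (z ^ j / (a + b n) ^ j - (1 + z) ^ j / (b n) ^ j + 1 / (b n) ^ j)
      = ∑ k ∈ Finset.Icc 1 p,
          (∑' n, ((-1) ^ k / (k : ℝ) * a ^ k / (a + b n) ^ k
            - ∑ j ∈ Finset.Icc k p, (-1) ^ j / (j : ℝ) * (j.choose k) * a ^ j / (b n) ^ j))
            * z ^ k := by
  have hb0 : ∀ n, b n ≠ 0 := fun n => (hb n).ne'
  have hab : ∀ n, a + b n ≠ 0 := fun n => (add_pos ha (hb n)).ne'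
  have hexpr : ∀ k, k ∈ Icc 1 p → ∀ n : ℕ,
      ((-1) ^ k / (k : ℝ) * a ^ k / (a + b n) ^ k
        - ∑ j ∈ Icc k p, (-1) ^ j / (j : ℝ) * (j.choose k) * a ^ j / (b n) ^ j)
      = cfun p k (a / b n) := by
    intro k hk n
    have h1 : a / b n / (1 + a / b n) = a / (a + b n) := by
      have hd : (0:ℝ) < 1 + a / b n := by
        have := div_pos ha (hb n); linarith
      have hd2 : (0:ℝ) < a + b n := add_pos ha (hb n)
      rw [div_div, div_eq_div_iff (mul_pos (hb n) hd).ne' hd2.ne']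
      field_simp
      rw [mul_comm, add_mul, one_mul, div_mul_cancel₀ _ (hb0 n), add_comm]
    unfold cfun
    rw [h1]
    congr 1
    · rw [div_pow]; ring
    · exact Finset.sum_congr rfl fun j _ => by rw [div_pow]; ring
  have hsummable : ∀ k, k ∈ Icc 1 p → Summable (fun n => cfun p k (a / b n)) := by
    intro k hk
    obtain ⟨hk1, hkp⟩ := mem_Icc.mp hk
    obtain ⟨D, hD, hDb⟩ := cfun_bound p k hk1 hkp
    refine Summable.of_norm_bounded (g := fun n => (D * a^(p+1)) * (1 / b n ^ (p+1)))
      (hsum.mul_left _) fun n => ?_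
    rw [Real.norm_eq_abs]
    have hx : (0:ℝ) ≤ a / b n := le_of_lt (div_pos ha (hb n))
    calc |cfun p k (a / b n)| ≤ D * (a / b n)^(p+1) := hDb _ hx
      _ = D * a^(p+1) * (1 / b n ^ (p+1)) := by rw [div_pow]; ring
  have hpt : ∀ n : ℕ, ∑ j ∈ Icc 1 p, (-1) ^ j / (j : ℝ) * a ^ j *
        (z ^ j / (a + b n) ^ j - (1 + z) ^ j / (b n) ^ j + 1 / (b n) ^ j)
      = ∑ k ∈ Icc 1 p, cfun p k (a / b n) * z ^ k := by
    intro n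
    rw [pointwise p a (b n) z]
    exact Finset.sum_congr rfl fun k hk => by rw [hexpr k hk n]
  rw [tsum_congr hpt, Summable.tsum_finsetSum (fun k hk => (hsummable k hk).mul_right (z^k))]
  refine Finset.sum_congr rfl fun k hk => ?_
  rw [tsum_mul_right]
  congr 1
  exact tsum_congr fun n => (hexpr k hk n).symm ▸ rfl
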